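/- If F is a respectful function, then for every ordinal α and every binary relation R on the states, R ⊆ ∼_α implies F(R) ⊆ ∼_α. -/

import Mathlib

universe u v

/-- `Progress Tr R S` means relation `R` progresses to relation `S`
in the labelled transition system with transition relation `Tr`. -/
def Progress {St : Type u} {Δ : Type v} (Tr : St → Δ → St → Prop)
    (R S : Set (St × St)) : Prop :=
  ∀ p q, (p, q) ∈ R →
    (∀ a p', Tr p a p' → ∃ q', Tr q a q' ∧ (p', q') ∈ S) ∧
    (∀ a q', Tr q a q' → ∃ p', Tr p a p' ∧ (p', q') ∈ S)

/-- A function on relations is respectful if whenever `R ⊆ S` and `R ⤳ S`,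
also `F R ⊆ F S` and `F R ⤳ F S`. -/
def Respectful {St : Type u} {Δ : Type v} (Tr : St → Δ → St → Prop)
    (F : Set (St × St) → Set (St × St)) : Prop :=
  ∀ R S : Set (St × St), R ⊆ S → Progress Tr R S →
    F R ⊆ F S ∧ Progress Tr (F R) (F S)

/-- Milner's stratification of bisimilarity: `∼₀ = univ`,
`∼_{α+1} = ⋃ {X | X ⤳ ∼_α}`, `∼_λ = ⋂_{β<λ} ∼_β` for limits. -/
noncomputable def Strat {St : Type u} {Δ : Type v} (Tr : St → Δ → St → Prop)
    (α : Ordinal.{w}) : Set (St × St) :=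
  Ordinal.limitRecOn α
    Set.univ
    (fun _ ih => ⋃₀ {X | Progress Tr X ih})
    (fun o _ ih => ⋂ (β : Ordinal.{w}) (h : β < o), ih β h)

section Aux

variable {St : Type u} {Δ : Type v} (Tr : St → Δ → St → Prop)

lemma strat_zero : Strat Tr (0 : Ordinal.{w}) = Set.univ :=
  Ordinal.limitRecOn_zero ..

lemma strat_succ (α : Ordinal.{w}) :
    Strat Tr (Order.succ α) = ⋃₀ {X | Progress Tr X (Strat Tr α)} :=
  Ordinal.limitRecOn_succ ..

lemma strat_limit {α : Ordinal.{w}} (h : Order.IsSuccLimit α) :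
    Strat Tr α = ⋂ (β : Ordinal.{w}) (_ : β < α), Strat Tr β :=
  Ordinal.limitRecOn_limit _ _ _ _ h

lemma progress_mono {R' R S S' : Set (St × St)} (hR : R' ⊆ R) (hS : S ⊆ S')
    (h : Progress Tr R S) : Progress Tr R' S' := by
  intro p q hpq
  obtain ⟨h1, h2⟩ := h p q (hR hpq)
  constructor
  · intro a p' ht
    obtain ⟨q', hq', hmem⟩ := h1 a p' ht
    exact ⟨q', hq', hS hmem⟩
  · intro a q' ht
    obtain ⟨p', hp', hmem⟩ := h2 a q' ht
    exact ⟨p', hp', hS hmem⟩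

lemma progress_subset_strat :
    ∀ (α : Ordinal.{w}) (X : Set (St × St)),
      Progress Tr X (Strat Tr α) → X ⊆ Strat Tr α := by
  intro α
  induction α using Ordinal.limitRecOn with
  | zero =>
    intro X _
    rw [strat_zero]
    exact Set.subset_univ X
  | add_one α ih =>
    rw [← Order.succ_eq_add_one]
    intro X hX
    have hsub : Strat Tr (Order.succ α) ⊆ Strat Tr α := by
      rw [strat_succ]
      intro x hx
      obtain ⟨Y, hY, hxY⟩ := hx
      exact ih Y hY hxY
    rw [strat_succ]
    exact Set.subset_sUnion_of_mem
      (progress_mono Tr (Set.Subset.refl X) hsub hX)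
  | limit α hlim ih =>
    intro X hX
    rw [strat_limit Tr hlim]
    refine Set.subset_iInter fun β => Set.subset_iInter fun hβ => ?_
    have hsub : Strat Tr α ⊆ Strat Tr β := by
      rw [strat_limit Tr hlim]
      exact Set.iInter_subset_of_subset β (Set.iInter_subset _ hβ)
    exact ih β hβ X (progress_mono Tr (Set.Subset.refl X) hsub hX)

lemma strat_succ_progress (α : Ordinal.{w}) :
    Progress Tr (Strat Tr (Order.succ α)) (Strat Tr α) := by
  intro p q hpq
  rw [strat_succ] at hpq
  obtain ⟨Y, hY, hmem⟩ := hpq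
  exact hY p q hmem

end Aux

theorem respectful_strat {St : Type u} {Δ : Type v} (Tr : St → Δ → St → Prop)
    (F : Set (St × St) → Set (St × St)) (hF : Respectful Tr F) :
    ∀ (α : Ordinal.{u}) (R : Set (St × St)), R ⊆ Strat Tr α → F R ⊆ Strat Tr α := by
  intro α
  induction α using Ordinal.limitRecOn with
  | zero =>
    intro R _
    rw [strat_zero]
    exact Set.subset_univ _
  | add_one α ih =>
    rw [← Order.succ_eq_add_one]
    intro R hR
    have hprog : Progress Tr (Strat Tr (Order.succ α)) (Strat Tr α) :=
      strat_succ_progress Tr α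
    have hsub : Strat Tr (Order.succ α) ⊆ Strat Tr α :=
      progress_subset_strat Tr α _ hprog
    have hR' : R ⊆ Strat Tr α := hR.trans hsub
    have hRprog : Progress Tr R (Strat Tr α) :=
      progress_mono Tr hR (Set.Subset.refl _) hprog
    obtain ⟨hFsub, hFprog⟩ := hF R (Strat Tr α) hR' hRprog
    have hFS : F (Strat Tr α) ⊆ Strat Tr α := ih (Strat Tr α) (Set.Subset.refl _)
    have : Progress Tr (F R) (Strat Tr α) :=
      progress_mono Tr (Set.Subset.refl _) hFS hFprog
    rw [strat_succ]
    exact Set.subset_sUnion_of_mem this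
  | limit α hlim ih =>
    intro R hR
    rw [strat_limit Tr hlim]
    refine Set.subset_iInter fun β => Set.subset_iInter fun hβ => ?_
    have : R ⊆ Strat Tr β := by
      refine hR.trans ?_
      rw [strat_limit Tr hlim]
      exact Set.iInter_subset_of_subset β (Set.iInter_subset _ hβ)
    exact ih β hβ R this
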